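/- Let c be a proper 3-colouring of a graph G and let v be a vertex lying on a 'rising path' v_0, v_1, ..., v_t (i.e., c(v_i) ≡ c(v_{i−1}) + 1 mod 3 for all i) such that some v_r with r < t is adjacent to v_t and c(v_r) ≡ c(v_t) + 1 mod 3. Then the vertices v_r, v_{r+1}, ..., v_t form a cycle on which the colours are cyclically 1,2,3 repeated, and hence all of v_r, ..., v_t are fixed with respect to c (no reachable proper 3-colouring recolours any of them). -/
import Mathlib


/-- A colouring is proper if adjacent vertices receive different colours. -/
def ProperColouring {V α : Type*} (G : SimpleGraph V) (c : V → α) : Prop :=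
  ∀ u v : V, G.Adj u v → c u ≠ c v

/-- A single-vertex recolouring step: the new colouring is proper and differs
from the old one on exactly one vertex. -/
def RecolStep {V α : Type*} (G : SimpleGraph V) (c d : V → α) : Prop :=
  ProperColouring G d ∧ ∃ x : V, c x ≠ d x ∧ ∀ v : V, v ≠ x → c v = d v

lemma zmod3_trich (a b : ZMod 3) (h0 : b ≠ a) (h1 : b ≠ a + 1) (h2 : b ≠ a - 1) : False := by
  revert h0 h1 h2; revert a b; decide

/-- let `c` be a proper 3-colouring of `G` and let
`v 0, v 1, …, v t` be a rising path (colours increase by one mod 3 along the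
path). If some `v r` with `r < t` is adjacent to `v t` and
`c (v r) = c (v t) + 1`, then `v r, …, v t` form a cycle coloured cyclically
`1,2,3` (so its length `t - r + 1` is divisible by 3) and all of
`v r, …, v t` are fixed with respect to `c`: every proper 3-colouring reachable
from `c` by single-vertex recolourings agrees with `c` on them. -/
theorem stmt_19 {V : Type*} (G : SimpleGraph V) (c : V → ZMod 3)
    (hc : ProperColouring G c) (t r : ℕ) (hr : r < t)
    (v : ℕ → V)
    (hinj : ∀ i ≤ t, ∀ j ≤ t, v i = v j → i = j)
    (hpath : ∀ i < t, G.Adj (v i) (v (i + 1)))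
    (hrise : ∀ i < t, c (v (i + 1)) = c (v i) + 1)
    (hchord : G.Adj (v r) (v t)) (hcol : c (v r) = c (v t) + 1) :
    3 ∣ (t - r + 1) ∧
      ∀ c' : V → ZMod 3, Relation.ReflTransGen (RecolStep G) c c' →
        ∀ i : ℕ, r ≤ i → i ≤ t → c' (v i) = c (v i) := by
  constructor
  · -- colours accumulate along the path
    have key : ∀ k, r + k ≤ t → c (v (r + k)) = c (v r) + (k : ZMod 3) := by
      intro k
      induction k with
      | zero => simp
      | succ n ih =>
        intro h
        have h1 : r + n < t := by omega
        have := hrise (r + n) h1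
        rw [show r + (n + 1) = (r + n) + 1 by ring, this, ih (by omega)]
        push_cast; ring
    have h2 : c (v t) = c (v r) + ((t - r : ℕ) : ZMod 3) := by
      have := key (t - r) (by omega)
      rwa [show r + (t - r) = t by omega] at this
    have h3 : ((t - r + 1 : ℕ) : ZMod 3) = 0 := by
      rw [h2] at hcol
      push_cast
      linear_combination -hcol
    exact (ZMod.natCast_eq_zero_iff _ _).mp h3
  · intro c' hreach
    induction hreach with
    | refl => intro i _ _; rfl
    | tail _ step ih =>
      rename_i b d _
      obtain ⟨hd, x, hx, hother⟩ := step
      intro i hri hit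
      by_cases hvx : v i = x
      · exfalso
        -- find the two neighbours of v i on the cycle
        have neigh : ∃ j₁ j₂ : ℕ, r ≤ j₁ ∧ j₁ ≤ t ∧ r ≤ j₂ ∧ j₂ ≤ t ∧ j₁ ≠ i ∧ j₂ ≠ i ∧
            G.Adj (v i) (v j₁) ∧ G.Adj (v i) (v j₂) ∧
            c (v j₁) = c (v i) + 1 ∧ c (v j₂) = c (v i) - 1 := by
          rcases eq_or_lt_of_le hit with hit' | hit'
          · -- i = t : successor is v r (chord), predecessor is v (t-1)
            subst hit'
            refine ⟨r, i - 1, le_refl r, by omega, by omega, by omega, by omega, by omega,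
              hchord.symm, ?_, hcol, ?_⟩
            · have := hpath (i - 1) (by omega)
              rw [show i - 1 + 1 = i by omega] at this
              exact this.symm
            · have := hrise (i - 1) (by omega)
              rw [show i - 1 + 1 = i by omega] at this
              rw [this]; ring
          · -- i < t : successor is v (i+1)
            rcases eq_or_lt_of_le hri with hri' | hri'
            · -- i = r : predecessor is v t (chord)
              subst hri'
              refine ⟨r + 1, t, by omega, by omega, by omega, le_refl t, by omega, by omega,
                hpath r hit', ?_, hrise r hit', ?_⟩
              · exact hchord
              · rw [hcol]; ring
            · refine ⟨i + 1, i - 1, by omega, by omega, by omega, by omega, by omega, by omega,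
                hpath i hit', ?_, hrise i hit', ?_⟩
              · have := hpath (i - 1) (by omega)
                rw [show i - 1 + 1 = i by omega] at this
                exact this.symm
              · have := hrise (i - 1) (by omega)
                rw [show i - 1 + 1 = i by omega] at this
                rw [this]; ring
        obtain ⟨j₁, j₂, hj₁r, hj₁t, hj₂r, hj₂t, hj₁i, hj₂i, ha₁, ha₂, hc₁, hc₂⟩ := neigh
        have hne₁ : v j₁ ≠ x := fun h => hj₁i (hinj j₁ hj₁t i hit (h.trans hvx.symm))
        have hne₂ : v j₂ ≠ x := fun h => hj₂i (hinj j₂ hj₂t i hit (h.trans hvx.symm))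
        have hd₁ : d (v j₁) = c (v i) + 1 := by
          rw [← hother _ hne₁, ih j₁ hj₁r hj₁t, hc₁]
        have hd₂ : d (v j₂) = c (v i) - 1 := by
          rw [← hother _ hne₂, ih j₂ hj₂r hj₂t, hc₂]
        have hne0 : d (v i) ≠ c (v i) := by
          intro h
          apply hx
          rw [← hvx, ih i hri hit, h]
        exact zmod3_trich (c (v i)) (d (v i)) hne0
          (by rw [← hd₁]; exact hd (v i) (v j₁) ha₁)
          (by rw [← hd₂]; exact hd (v i) (v j₂) ha₂)
      · rw [← hother _ hvx, ih i hri hit]
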